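/- Let P ⊆ R be an ideal and suppose c := max{Eord_η(P) : η ∈ W} is a positive integer attained on W. Assume every point ξ ∈ W with Eord_ξ(P) = c satisfies ξ_1 = 0 (i.e. the hypersurface V = {x_1 = 0} contains the E-top locus of P; this is the static property of a hypersurface of E-maximal contact). Then the E-top locus equals the E-top locus of the coefficient ideal with control c!: {ξ ∈ W : Eord_ξ(P) = c} = {ξ ∈ W : ξ_1 = 0 and Eord_{ξ'}(C(P,c)) ≥ c!}. -/

import Mathlib

open MvPolynomial

noncomputable section

/-- The variable index type: `x`-variables indexed by `Fin s`, `y`-variables by `Fin r`. -/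
abbrev BV (s r : ℕ) : Type := Fin s ⊕ Fin r

/-- The polynomial ring `R = K[x_1,…,x_s,y_1,…,y_r]`. -/
abbrev BR (K : Type) [Field K] (s r : ℕ) : Type := MvPolynomial (BV s r) K

variable (K : Type) [Field K] (s r : ℕ)

/-- `W`: the set of points all of whose `y`-coordinates are nonzero. -/
def Wset : Set (BV s r → K) := {ξ | ∀ j : Fin r, ξ (Sum.inr j) ≠ 0}

/-- `I_ξ`: the ideal generated by the variables vanishing at `ξ`. -/
def Ivan (ξ : BV s r → K) : Ideal (BR K s r) :=
  Ideal.span {p : BR K s r | ∃ i : BV s r, ξ i = 0 ∧ p = X i}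

/-- `m_ξ`: the maximal ideal of polynomials vanishing at `ξ`. -/
def mAt (ξ : BV s r → K) : Ideal (BR K s r) := RingHom.ker (eval ξ)

instance mAt_isMaximal (ξ : BV s r → K) : (mAt K s r ξ).IsMaximal :=
  RingHom.ker_isMaximal_of_surjective _ (fun a => ⟨C a, eval_C a⟩)

/-- `O_ξ`: the localization of `R` at `m_ξ`. -/
abbrev Oloc (ξ : BV s r → K) : Type := Localization.AtPrime (mAt K s r ξ)

/-- The `E`-order of an ideal `J` at a point `ξ`:
`sup { m : J·O_ξ ⊆ (I_ξ·O_ξ)^m }`. -/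
def Eord (ξ : BV s r → K) (J : Ideal (BR K s r)) : ℕ∞ :=
  sSup ((fun m : ℕ => (m : ℕ∞)) ''
    {m : ℕ | J.map (algebraMap (BR K s r) (Oloc K s r ξ)) ≤
      ((Ivan K s r ξ).map (algebraMap (BR K s r) (Oloc K s r ξ))) ^ m})

/-- The order of an ideal `J` at a point `ξ`:
`sup { m : J·O_ξ ⊆ (m_ξ·O_ξ)^m }`. -/
def ordAt (ξ : BV s r → K) (J : Ideal (BR K s r)) : ℕ∞ :=
  sSup ((fun m : ℕ => (m : ℕ∞)) ''
    {m : ℕ | J.map (algebraMap (BR K s r) (Oloc K s r ξ)) ≤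
      ((mAt K s r ξ).map (algebraMap (BR K s r) (Oloc K s r ξ))) ^ m})

/-- `x^α`. -/
def xPow (α : Fin s → ℕ) : BR K s r := ∏ i, X (Sum.inl i) ^ α i

/-- `y^γ` for `γ ∈ ℕ^r`. -/
def yPow (γ : Fin r → ℕ) : BR K s r := ∏ j, X (Sum.inr j) ^ γ j

/-- positive part `γ₊` of `γ ∈ ℤ^r`. -/
def ipos (γ : Fin r → ℤ) : Fin r → ℕ := fun j => (γ j).toNat

/-- negative part `γ₋` of `γ ∈ ℤ^r`. -/
def ineg (γ : Fin r → ℤ) : Fin r → ℕ := fun j => (-(γ j)).toNat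

/-- a non-hyperbolic binomial `y^{γ₊}x^α − b·y^{γ₋}x^β`. -/
def nhb (γ : Fin r → ℤ) (α β : Fin s → ℕ) (b : K) : BR K s r :=
  yPow K s r (ipos r γ) * xPow K s r α - C b * yPow K s r (ineg r γ) * xPow K s r β

/-- a hyperbolic equation `y^{δ₋} − μ·y^{δ₊}`. -/
def hyp (δ : Fin r → ℤ) (μ : K) : BR K s r :=
  yPow K s r (ineg r δ) - C μ * yPow K s r (ipos r δ)

/-- a generator of a binomial ideal:
`x^λ(y^{δ₋} − μ y^{δ₊})` or `x^ν(y^{γ₊}x^α − b y^{γ₋}x^β)` with `α,β` of disjoint supports. -/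
def IsBinomGen (g : BR K s r) : Prop :=
  (∃ (lam : Fin s → ℕ) (δ : Fin r → ℤ) (μ : K),
      g = xPow K s r lam * hyp K s r δ μ) ∨
  (∃ (ν α β : Fin s → ℕ) (γ : Fin r → ℤ) (b : K),
      (∀ i, α i = 0 ∨ β i = 0) ∧ g = xPow K s r ν * nhb K s r γ α β b)

/-- a binomial ideal: an ideal generated by finitely many binomial generators. -/
def IsBinomialIdeal (J : Ideal (BR K s r)) : Prop :=
  ∃ S : Finset (BR K s r), (∀ g ∈ S, IsBinomGen K s r g) ∧ J = Ideal.span (S : Set (BR K s r))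

open Classical in
/-- `|ν|_ξ = Σ_{i : ξ_i = 0} ν_i` (sum over vanishing x-coordinates). -/
def nsumAt (ξ : BV s r → K) (ν : Fin s → ℕ) : ℕ :=
  ∑ i, if ξ (Sum.inl i) = 0 then ν i else 0


/-- `Option A ⊕ B ≃ Option (A ⊕ B)`. -/
def optSum (A B : Type) : Option A ⊕ B ≃ Option (A ⊕ B) :=
  ((Equiv.optionEquivSumPUnit A).sumCongr (Equiv.refl B)).trans <|
    (Equiv.sumAssoc A PUnit.{1} B).trans <|
      ((Equiv.refl A).sumCongr (Equiv.sumComm PUnit.{1} B)).trans <|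
        (Equiv.sumAssoc A B PUnit.{1}).symm.trans
          (Equiv.optionEquivSumPUnit (A ⊕ B)).symm

/-- The variables of `K[x_1,…,x_{s+1},y]` split as the variable `x_1` (the `none` case)
and the variables of `K[x_2,…,x_{s+1},y]`. -/
def varEquiv : BV (s + 1) r ≃ Option (BV s r) :=
  ((finSuccEquiv s).sumCongr (Equiv.refl (Fin r))).trans (optSum (Fin s) (Fin r))

/-- Identification of `R = K[x_1,…,x_{s+1},y]` with `R'[x_1]`, `R' = K[x_2,…,x_{s+1},y]`. -/
def toPoly : BR K (s + 1) r ≃ₐ[K] Polynomial (BR K s r) :=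
  (renameEquiv K (varEquiv s r)).trans (optionEquivLeft K (BV s r))

/-- `a_{f,k}`: the coefficient of `x_1^k` in `f` under the identification `R = R'[x_1]`. -/
def coeffAt (f : BR K (s + 1) r) (k : ℕ) : BR K s r :=
  (toPoly K s r f).coeff k

/-- The coefficient ideal `C(P,c)` of `P` along `E` with respect to `V = {x_1 = 0}`,
with factorial normalization: it is generated by the `a_{f,k}^{c!/(c-k)}`, `f ∈ P`, `k < c`. -/
def coeffIdeal (P : Ideal (BR K (s + 1) r)) (c : ℕ) : Ideal (BR K s r) :=
  Ideal.span {g : BR K s r |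
    ∃ f ∈ P, ∃ k < c, g = coeffAt K s r f k ^ (Nat.factorial c / (c - k))}

/-- `ξ'`: the point `ξ` with its first (`x_1`) coordinate removed. -/
def resPt (ξ : BV (s + 1) r → K) : BV s r → K :=
  fun v => match v with
  | Sum.inl i => ξ (Sum.inl i.succ)
  | Sum.inr j => ξ (Sum.inr j)

open Classical in
/-- The chart morphism `σ_j` of the blow-up along `Z = ∩_{i ∈ I} {x_i = 0}`:
`x_i ↦ x_i·x_j` for `i ∈ I ∖ {j}`, all other variables are fixed. -/
def chart (I : Finset (Fin s)) (j : Fin s) : BR K s r →ₐ[K] BR K s r :=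
  aeval (fun v : BV s r => match v with
    | Sum.inl i => if i ∈ I ∧ i ≠ j then X (Sum.inl i) * X (Sum.inl j) else X (Sum.inl i)
    | Sum.inr k => X (Sum.inr k))

end

noncomputable section AuxOrder
open MvPolynomial
variable {K : Type} [Field K] {s r : ℕ}

open Classical in
/-- weighted degree: total degree in the variables vanishing at ξ -/
def wdeg (ξ : BV s r → K) (d : BV s r →₀ ℕ) : ℕ :=
  d.sum fun v n => if ξ v = 0 then n else 0

open Classical in
lemma wdeg_def (ξ : BV s r → K) (d : BV s r →₀ ℕ) :
    wdeg ξ d = ∑ v ∈ d.support, if ξ v = 0 then d v else 0 := rfl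

open Classical in
lemma wdeg_add (ξ : BV s r → K) (a b : BV s r →₀ ℕ) :
    wdeg ξ (a + b) = wdeg ξ a + wdeg ξ b := by
  unfold wdeg
  rw [Finsupp.sum_add_index]
  · intro v _; simp
  · intro v _ m n; split <;> simp

open Classical in
lemma wdeg_single (ξ : BV s r → K) (v : BV s r) (n : ℕ) :
    wdeg ξ (Finsupp.single v n) = if ξ v = 0 then n else 0 := by
  unfold wdeg
  rw [Finsupp.sum_single_index]
  simp

lemma wdeg_single_of_zero (ξ : BV s r → K) {v : BV s r} (hv : ξ v = 0) (n : ℕ) :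
    wdeg ξ (Finsupp.single v n) = n := by
  classical rw [wdeg_single, if_pos hv]

/-- the ideal of polynomials all of whose monomials have `wdeg ≥ m` -/
def Jpow (ξ : BV s r → K) (m : ℕ) : Ideal (BR K s r) where
  carrier := {f | ∀ d ∈ f.support, m ≤ wdeg ξ d}
  zero_mem' := by simp
  add_mem' := by
    intro f g hf hg d hd
    rcases Finset.mem_union.1 (MvPolynomial.support_add hd) with h | h
    exacts [hf d h, hg d h]
  smul_mem' := by
    intro c f hf d hd
    rw [smul_eq_mul] at hd
    rcases Finset.mem_add.1 (MvPolynomial.support_mul _ _ hd) with ⟨a, ha, b, hb, rfl⟩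
    calc m ≤ wdeg ξ b := hf b hb
    _ ≤ wdeg ξ a + wdeg ξ b := Nat.le_add_left _ _
    _ = wdeg ξ (a + b) := (wdeg_add ξ a b).symm

lemma mem_Jpow {ξ : BV s r → K} {m : ℕ} {f : BR K s r} :
    f ∈ Jpow ξ m ↔ ∀ d ∈ f.support, m ≤ wdeg ξ d := Iff.rfl

lemma mul_mem_Jpow {ξ : BV s r → K} {a b : ℕ} {f g : BR K s r}
    (hf : f ∈ Jpow ξ a) (hg : g ∈ Jpow ξ b) : f * g ∈ Jpow ξ (a + b) := by
  intro d hd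
  rcases Finset.mem_add.1 (MvPolynomial.support_mul _ _ hd) with ⟨u, hu, v, hv, rfl⟩
  rw [wdeg_add]
  exact Nat.add_le_add (hf u hu) (hg v hv)

lemma Ivan_le_Jpow_one (ξ : BV s r → K) : Ivan K s r ξ ≤ Jpow ξ 1 := by
  rw [Ivan, Ideal.span_le]
  rintro p ⟨v, hv, rfl⟩ d hd
  rw [MvPolynomial.support_X] at hd
  rw [Finset.mem_singleton] at hd
  subst hd
  rw [wdeg_single_of_zero ξ hv]

lemma Ivan_pow_le_Jpow (ξ : BV s r → K) (m : ℕ) : Ivan K s r ξ ^ m ≤ Jpow ξ m := by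
  induction m with
  | zero => intro f _ d _; exact Nat.zero_le _
  | succ m ih =>
    rw [pow_succ]
    refine Ideal.mul_le.2 fun f hf g hg => ?_
    exact mul_mem_Jpow (ih hf) (Ivan_le_Jpow_one ξ hg)

open Classical in
lemma monomial_mem_Ivan_pow {ξ : BV s r → K} {m : ℕ} {d : BV s r →₀ ℕ} (a : K)
    (h : m ≤ wdeg ξ d) : monomial d a ∈ Ivan K s r ξ ^ m := by
  induction m generalizing d with
  | zero => simp
  | succ m ih =>
    have hwd : wdeg ξ d ≠ 0 := by omega
    rw [wdeg_def] at hwd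
    have : ∃ v ∈ d.support, (if ξ v = 0 then d v else 0) ≠ 0 := by
      by_contra hc
      push_neg at hc
      exact hwd (Finset.sum_eq_zero hc)
    obtain ⟨v, hv, hvn⟩ := this
    have hξv : ξ v = 0 := by by_contra h'; simp [h'] at hvn
    have hdv : 1 ≤ d v := by rw [if_pos hξv] at hvn; omega
    have hdd : (d - Finsupp.single v 1) + Finsupp.single v 1 = d := by
      ext w
      simp only [Finsupp.add_apply, Finsupp.tsub_apply, Finsupp.single_apply]
      rcases eq_or_ne v w with h' | h'
      · subst h'; simp; omega
      · simp [h']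
    have hw' : m ≤ wdeg ξ (d - Finsupp.single v 1) := by
      have h2 := wdeg_add ξ (d - Finsupp.single v 1) (Finsupp.single v 1)
      rw [hdd, wdeg_single_of_zero ξ hξv] at h2
      omega
    have hm : monomial d a = monomial (d - Finsupp.single v 1) a * X v := by
      rw [X, monomial_mul, mul_one, hdd]
    rw [hm, pow_succ]
    exact Ideal.mul_mem_mul (ih hw') (Ideal.subset_span ⟨v, hξv, rfl⟩)

lemma Jpow_le_Ivan_pow (ξ : BV s r → K) (m : ℕ) : Jpow ξ m ≤ Ivan K s r ξ ^ m := by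
  intro f hf
  rw [← MvPolynomial.support_sum_monomial_coeff f]
  exact Ideal.sum_mem _ fun d hd => monomial_mem_Ivan_pow _ (hf d hd)

lemma Ivan_pow_eq_Jpow (ξ : BV s r → K) (m : ℕ) : Ivan K s r ξ ^ m = Jpow ξ m :=
  le_antisymm (Ivan_pow_le_Jpow ξ m) (Jpow_le_Ivan_pow ξ m)

end AuxOrder
noncomputable section AuxPhi
open MvPolynomial
variable {K : Type} [Field K] {s r : ℕ}

open Classical in
/-- auxiliary grading homomorphism recording `wdeg` in a polynomial variable -/
def Phi (ξ : BV s r → K) : BR K s r →ₐ[K] Polynomial (BR K s r) :=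
  aeval fun v => if ξ v = 0 then Polynomial.C (X v) * Polynomial.X else Polynomial.C (X v)

open Classical in
lemma Phi_monomial (ξ : BV s r → K) (d : BV s r →₀ ℕ) (a : K) :
    Phi ξ (monomial d a) = Polynomial.C (monomial d a) * Polynomial.X ^ wdeg ξ d := by
  rw [Phi, aeval_monomial]
  have hfac : ∀ v ∈ d.support,
      (if ξ v = 0 then Polynomial.C (X (R := K) v) * Polynomial.X else Polynomial.C (X v)) ^ d v
        = Polynomial.C (X v ^ d v) * Polynomial.X ^ (if ξ v = 0 then d v else 0) := by
    intro v _
    split_ifs with h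
    · rw [mul_pow, Polynomial.C_pow]
    · rw [Polynomial.C_pow, pow_zero, mul_one]
  have h1 : (d.prod fun i k =>
      (if ξ i = 0 then Polynomial.C (X (R := K) i) * Polynomial.X else Polynomial.C (X i)) ^ k)
      = Polynomial.C (d.prod fun i n => X i ^ n) * Polynomial.X ^ wdeg ξ d := by
    simp only [Finsupp.prod]
    rw [Finset.prod_congr rfl hfac, Finset.prod_mul_distrib, ← map_prod,
      Finset.prod_pow_eq_pow_sum, ← wdeg_def]
  rw [h1, monomial_eq]
  have h2 : algebraMap K (Polynomial (BR K s r)) a = Polynomial.C (C a) := rfl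
  rw [h2, map_mul, ← mul_assoc]

open Classical in
lemma coeff_Phi_coeff (ξ : BV s r → K) (f : BR K s r) (k : ℕ) (d : BV s r →₀ ℕ) :
    coeff d ((Phi ξ f).coeff k) = if wdeg ξ d = k then coeff d f else 0 := by
  induction f using MvPolynomial.induction_on' with
  | monomial d0 a =>
    rw [Phi_monomial]
    rw [Polynomial.coeff_C_mul, Polynomial.coeff_X_pow]
    rcases eq_or_ne d0 d with rfl | hne
    · simp only [coeff_monomial, if_pos rfl]
      rcases eq_or_ne (wdeg ξ d0) k with h | h
      · simp [h]
      · simp [h, Ne.symm h]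
    · split_ifs <;> simp [coeff_monomial, hne]
  | add p q hp hq =>
    rw [map_add, Polynomial.coeff_add, coeff_add, coeff_add, hp, hq]
    split <;> simp

open Classical in
lemma Phi_coeff_eq_zero_iff (ξ : BV s r → K) (f : BR K s r) (k : ℕ) :
    (Phi ξ f).coeff k = 0 ↔ ∀ d ∈ f.support, wdeg ξ d ≠ k := by
  constructor
  · intro h d hd hw
    have h2 := coeff_Phi_coeff ξ f k d
    rw [h, if_pos hw] at h2
    exact (MvPolynomial.mem_support_iff.1 hd) (by simpa using h2.symm)
  · intro h
    apply MvPolynomial.ext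
    intro d
    rw [coeff_Phi_coeff, coeff_zero]
    split_ifs with h'
    · by_contra h0
      exact h d (MvPolynomial.mem_support_iff.2 h0) h'
    · rfl

lemma mem_Jpow_iff_trailingDegree {ξ : BV s r → K} {m : ℕ} {f : BR K s r} :
    f ∈ Jpow ξ m ↔ (m : ℕ∞) ≤ (Phi ξ f).trailingDegree := by
  classical
  change f ∈ Jpow ξ m ↔ ((m : WithTop ℕ)) ≤ (Phi ξ f).support.min
  rw [Finset.le_min_iff, mem_Jpow]
  constructor
  · intro h k hk
    rw [Polynomial.mem_support_iff] at hk
    have hne : ¬ ∀ d ∈ f.support, wdeg ξ d ≠ k := fun hc => hk ((Phi_coeff_eq_zero_iff ξ f k).2 hc)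
    push_neg at hne
    obtain ⟨d, hd, hwd⟩ := hne
    have h3 := h d hd
    have h4 : m ≤ k := by omega
    exact WithTop.coe_le_coe.mpr h4
  · intro h d hd
    have hsup : wdeg ξ d ∈ (Phi ξ f).support := by
      rw [Polynomial.mem_support_iff]
      intro hc
      exact (Phi_coeff_eq_zero_iff ξ f _ |>.1 hc) d hd rfl
    have h5 := h _ hsup
    exact WithTop.coe_le_coe.mp h5
end AuxPhi
noncomputable section AuxLoc
open MvPolynomial
variable {K : Type} [Field K] {s r : ℕ}

open Classical in
lemma eval_Phi_coeff_zero (ξ : BV s r → K) (f : BR K s r) :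
    eval ξ ((Phi ξ f).coeff 0) = eval ξ f := by
  induction f using MvPolynomial.induction_on' with
  | monomial d a =>
    rw [Phi_monomial, Polynomial.coeff_C_mul, Polynomial.coeff_X_pow]
    rcases eq_or_ne (wdeg ξ d) 0 with h | h
    · simp [h]
    · rw [if_neg (by omega), mul_zero, map_zero]
      rw [wdeg_def] at h
      have : ∃ v ∈ d.support, (if ξ v = 0 then d v else 0) ≠ 0 := by
        by_contra hc
        push_neg at hc
        exact h (Finset.sum_eq_zero hc)
      obtain ⟨v, hv, hvn⟩ := this
      have hξv : ξ v = 0 := by by_contra h'; simp [h'] at hvn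
      have hdv : d v ≠ 0 := by rw [if_pos hξv] at hvn; omega
      rw [eval_monomial, Finsupp.prod]
      rw [Finset.prod_eq_zero hv (by rw [hξv, zero_pow hdv]), mul_zero]
  | add p q hp hq =>
    rw [map_add, Polynomial.coeff_add, map_add, map_add, hp, hq]

lemma Phi_trailingDegree_eq_zero {ξ : BV s r → K} {u : BR K s r} (hu : eval ξ u ≠ 0) :
    (Phi ξ u).trailingDegree = 0 := by
  have h0 : (Phi ξ u).coeff 0 ≠ 0 := by
    intro hc
    apply hu
    rw [← eval_Phi_coeff_zero ξ u, hc, map_zero]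
  apply le_antisymm _ zero_le
  rw [Polynomial.trailingDegree]
  exact Finset.min_le (Polynomial.mem_support_iff.2 h0)

lemma cancel_mem_Jpow {ξ : BV s r → K} {m : ℕ} {f u : BR K s r}
    (h : f * u ∈ Jpow ξ m) (hu : eval ξ u ≠ 0) : f ∈ Jpow ξ m := by
  rw [mem_Jpow_iff_trailingDegree] at h ⊢
  rw [map_mul, Polynomial.trailingDegree_mul, Phi_trailingDegree_eq_zero hu, add_zero] at h
  exact h

lemma trailingDegree_pow_aux {p : Polynomial (BR K s r)} (N : ℕ) :
    (p ^ N).trailingDegree = N • p.trailingDegree := by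
  induction N with
  | zero => simp [Polynomial.trailingDegree_one]
  | succ n ih => rw [pow_succ, Polynomial.trailingDegree_mul, ih, succ_nsmul]

lemma pow_descent_Jpow {ξ : BV s r → K} {a N : ℕ} (hN : 0 < N) {f : BR K s r}
    (h : f ^ N ∈ Jpow ξ (a * N)) : f ∈ Jpow ξ a := by
  rw [mem_Jpow_iff_trailingDegree] at h ⊢
  rw [map_pow, trailingDegree_pow_aux] at h
  rcases eq_or_ne (Phi ξ f).trailingDegree ⊤ with ht | ht
  · rw [ht]; exact le_top
  · obtain ⟨t, hteq⟩ := WithTop.ne_top_iff_exists.1 ht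
    have hteq' : ((t : ℕ) : ℕ∞) = (Phi ξ f).trailingDegree := hteq
    rw [← hteq'] at h ⊢
    rw [nsmul_eq_mul, ← Nat.cast_mul] at h
    have h2 : a * N ≤ N * t := Nat.cast_le.mp h
    have h3 : a ≤ t := by
      have := Nat.le_of_mul_le_mul_left (le_of_eq_of_le (Nat.mul_comm N a ▸ rfl) (Nat.mul_comm a N ▸ h2) : N * a ≤ N * t) hN
      omega
    exact Nat.cast_le.mpr h3
end AuxLoc
noncomputable section AuxEord
open MvPolynomial
variable {K : Type} [Field K] {s r : ℕ}

lemma primeCompl_le_nzd (ξ : BV s r → K) :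
    (mAt K s r ξ).primeCompl ≤ nonZeroDivisors (BR K s r) := by
  apply le_nonZeroDivisors_of_noZeroDivisors
  intro h0
  exact h0 (by simp [Ideal.primeCompl, mAt, RingHom.mem_ker])

lemma map_le_map_pow_iff (ξ : BV s r → K) (J : Ideal (BR K s r)) (m : ℕ) :
    J.map (algebraMap (BR K s r) (Oloc K s r ξ)) ≤
      ((Ivan K s r ξ).map (algebraMap (BR K s r) (Oloc K s r ξ))) ^ m ↔
    J ≤ Ivan K s r ξ ^ m := by
  constructor
  · intro h f hf
    have hmem : algebraMap (BR K s r) (Oloc K s r ξ) f ∈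
        ((Ivan K s r ξ) ^ m).map (algebraMap (BR K s r) (Oloc K s r ξ)) := by
      rw [Ideal.map_pow]
      exact h (Ideal.mem_map_of_mem _ hf)
    rw [IsLocalization.mem_map_algebraMap_iff (mAt K s r ξ).primeCompl] at hmem
    obtain ⟨⟨a, u⟩, hau⟩ := hmem
    rw [← map_mul] at hau
    have hinj := IsLocalization.injective (Oloc K s r ξ) (primeCompl_le_nzd ξ)
    have hfu : f * (u : BR K s r) = (a : BR K s r) := hinj hau
    have hfu' : f * (u : BR K s r) ∈ Ivan K s r ξ ^ m := hfu ▸ a.2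
    rw [Ivan_pow_eq_Jpow] at hfu' ⊢
    have hu : eval ξ (u : BR K s r) ≠ 0 := fun hc =>
      u.2 (RingHom.mem_ker.mpr hc)
    exact cancel_mem_Jpow hfu' hu
  · intro h
    calc J.map _ ≤ ((Ivan K s r ξ) ^ m).map (algebraMap (BR K s r) (Oloc K s r ξ)) :=
          Ideal.map_mono h
    _ = _ := Ideal.map_pow _ _ _

lemma Eord_eq_sSup (ξ : BV s r → K) (J : Ideal (BR K s r)) :
    Eord K s r ξ J = sSup ((fun m : ℕ => (m : ℕ∞)) '' {m : ℕ | J ≤ Ivan K s r ξ ^ m}) := by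
  rw [Eord]
  congr 1
  ext x
  simp only [Set.mem_image, Set.mem_setOf_eq]
  constructor
  · rintro ⟨m, hm, rfl⟩; exact ⟨m, (map_le_map_pow_iff ξ J m).1 hm, rfl⟩
  · rintro ⟨m, hm, rfl⟩; exact ⟨m, (map_le_map_pow_iff ξ J m).2 hm, rfl⟩

-- sSup lemmas
lemma le_sSup_iff_mem {A : Set ℕ} (hdc : ∀ a b : ℕ, a ≤ b → b ∈ A → a ∈ A) (h0 : 0 ∈ A)
    (n : ℕ) : (n : ℕ∞) ≤ sSup ((fun m : ℕ => (m : ℕ∞)) '' A) ↔ n ∈ A := by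
  constructor
  · intro h
    by_contra hn
    have hlt : ∀ a ∈ A, a < n := by
      intro a ha
      by_contra hge
      exact hn (hdc n a (by omega) ha)
    have hb : sSup ((fun m : ℕ => (m : ℕ∞)) '' A) ≤ ((n - 1 : ℕ) : ℕ∞) := by
      apply sSup_le
      rintro x ⟨a, ha, rfl⟩
      exact Nat.cast_le.mpr (by have := hlt a ha; omega)
    have hn1 : (n : ℕ∞) ≤ ((n - 1 : ℕ) : ℕ∞) := le_trans h hb
    have hn0 : 0 < n := by
      rcases Nat.eq_zero_or_pos n with h' | h'
      · exact absurd (h' ▸ h0) hn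
      · exact h'
    have := Nat.cast_le.mp hn1
    omega
  · intro h
    exact le_sSup ⟨n, h, rfl⟩
end AuxEord
noncomputable section AuxCoeff
open MvPolynomial
variable {K : Type} [Field K] {s r : ℕ}

lemma varEquiv_inl_succ (i : Fin s) : varEquiv s r (Sum.inl i.succ) = some (Sum.inl i) := by
  simp [varEquiv, optSum, _root_.finSuccEquiv_succ]
lemma varEquiv_inl_zero : varEquiv s r (Sum.inl 0) = none := by
  simp [varEquiv, optSum, _root_.finSuccEquiv_zero]
lemma varEquiv_inr' (j : Fin r) : varEquiv s r (Sum.inr j) = some (Sum.inr j) := by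
  simp [varEquiv, optSum]

lemma toPoly_X_zero : toPoly K s r (X (Sum.inl 0)) = Polynomial.X := by
  simp [toPoly, varEquiv_inl_zero, optionEquivLeft_X_none]
lemma toPoly_X_succ (i : Fin s) :
    toPoly K s r (X (Sum.inl i.succ)) = Polynomial.C (X (Sum.inl i)) := by
  simp [toPoly, varEquiv_inl_succ, optionEquivLeft_X_some]
lemma toPoly_X_inr (j : Fin r) :
    toPoly K s r (X (Sum.inr j)) = Polynomial.C (X (Sum.inr j)) := by
  simp [toPoly, varEquiv_inr', optionEquivLeft_X_some]
lemma toPoly_C' (a : K) : toPoly K s r (C a) = Polynomial.C (C a) := by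
  simp [toPoly, optionEquivLeft_C]

/-- embedding of the smaller variable set into the bigger one -/
def emb : BV s r → BV (s + 1) r := Sum.elim (fun i => Sum.inl i.succ) Sum.inr

lemma emb_injective : Function.Injective (emb (s := s) (r := r)) := by
  rintro (i | j) (i' | j') h
  · simp only [emb, Sum.elim_inl, Sum.inl.injEq] at h
    exact congrArg Sum.inl (Fin.succ_injective _ h)
  · exact absurd h (by simp [emb])
  · exact absurd h (by simp [emb])
  · simpa [emb] using h

lemma emb_ne_inl0 (w : BV s r) : emb w ≠ Sum.inl 0 := by
  rcases w with i | j <;> simp [emb]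

/-- lift of an exponent of `R'` to an exponent of `R` with `x_1`-exponent `k` -/
def liftE (d' : BV s r →₀ ℕ) (k : ℕ) : BV (s + 1) r →₀ ℕ :=
  Finsupp.mapDomain emb d' + Finsupp.single (Sum.inl 0) k

lemma liftE_apply_inl0 (d' : BV s r →₀ ℕ) (k : ℕ) : liftE d' k (Sum.inl 0) = k := by
  rw [liftE, Finsupp.add_apply, Finsupp.mapDomain_notin_range, Finsupp.single_apply,
    if_pos rfl, zero_add]
  rintro ⟨w, hw⟩
  exact emb_ne_inl0 w hw

lemma liftE_apply_emb (d' : BV s r →₀ ℕ) (k : ℕ) (w : BV s r) :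
    liftE d' k (emb w) = d' w := by
  rw [liftE, Finsupp.add_apply, Finsupp.mapDomain_apply emb_injective,
    Finsupp.single_apply, if_neg (fun h => emb_ne_inl0 w h.symm), add_zero]

lemma liftE_eq_zero_iff (d' : BV s r →₀ ℕ) (k : ℕ) : liftE d' k = 0 ↔ d' = 0 ∧ k = 0 := by
  constructor
  · intro h
    constructor
    · ext w
      have := DFunLike.congr_fun h (emb w)
      simpa [liftE_apply_emb] using this
    · have := DFunLike.congr_fun h (Sum.inl 0)
      simpa [liftE_apply_inl0] using this
  · rintro ⟨rfl, rfl⟩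
    simp [liftE]

lemma liftE_succ_sub_single (d' : BV s r →₀ ℕ) (k : ℕ) :
    liftE d' (k + 1) - Finsupp.single (Sum.inl 0) 1 = liftE d' k := by
  rw [liftE, liftE, Finsupp.single_add, ← add_assoc]
  simp

lemma liftE_sub_single (d' : BV s r →₀ ℕ) (k : ℕ) (w : BV s r) :
    liftE (d' - Finsupp.single w 1) k = liftE d' k - Finsupp.single (emb w) 1 := by
  ext v
  rw [Finsupp.tsub_apply]
  by_cases hv : ∃ w', emb w' = v
  · obtain ⟨w', rfl⟩ := hv
    rw [liftE_apply_emb, liftE_apply_emb, Finsupp.tsub_apply, Finsupp.single_apply,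
      Finsupp.single_apply]
    by_cases hww : w = w'
    · subst hww; simp
    · rw [if_neg hww, if_neg (fun h => hww (emb_injective h))]
  · have hv0 : v = Sum.inl 0 := by
      rcases v with i | j
      · rcases Fin.eq_zero_or_eq_succ i with h | ⟨i', rfl⟩
        · rw [h]
        · exact absurd ⟨Sum.inl i', rfl⟩ hv
      · exact absurd ⟨Sum.inr j, rfl⟩ hv
    subst hv0
    rw [liftE_apply_inl0, liftE_apply_inl0, Finsupp.single_apply,
      if_neg (fun h => emb_ne_inl0 w h), Nat.sub_zero]

open Classical in
lemma coeff_coeffAt (f : BR K (s + 1) r) (k : ℕ) (d' : BV s r →₀ ℕ) :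
    coeff d' (coeffAt K s r f k) = coeff (liftE d' k) f := by
  unfold coeffAt
  induction f using MvPolynomial.induction_on generalizing k d' with
  | C a =>
    rw [toPoly_C', Polynomial.coeff_C]
    rcases eq_or_ne k 0 with rfl | hk
    · rw [if_pos rfl, MvPolynomial.coeff_C, MvPolynomial.coeff_C]
      by_cases hd : d' = 0
      · subst hd
        have h0 : liftE (0 : BV s r →₀ ℕ) 0 = 0 := (liftE_eq_zero_iff 0 0).2 ⟨rfl, rfl⟩
        simp [h0]
      · rw [if_neg (fun h => hd h.symm), if_neg (by
          intro h
          exact hd ((liftE_eq_zero_iff d' 0).1 h.symm).1)]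
    · rw [if_neg hk, coeff_zero, MvPolynomial.coeff_C, if_neg (by
        intro h
        exact hk ((liftE_eq_zero_iff d' k).1 h.symm).2)]
  | add p q hp hq =>
    rw [map_add, Polynomial.coeff_add, coeff_add, coeff_add, hp, hq]
  | mul_X p v hp =>
    rcases v with i | j
    · rcases Fin.eq_zero_or_eq_succ i with rfl | ⟨i', rfl⟩
      · rw [map_mul, toPoly_X_zero]
        cases k with
        | zero =>
          rw [Polynomial.coeff_mul_X_zero, coeff_zero, MvPolynomial.coeff_mul_X',
            if_neg (by simp [Finsupp.mem_support_iff, liftE_apply_inl0])]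
        | succ k =>
          rw [Polynomial.coeff_mul_X, hp, MvPolynomial.coeff_mul_X',
            if_pos (by simp [Finsupp.mem_support_iff, liftE_apply_inl0]),
            liftE_succ_sub_single]
      · rw [map_mul, toPoly_X_succ, Polynomial.coeff_mul_C, MvPolynomial.coeff_mul_X',
          MvPolynomial.coeff_mul_X']
        have h1 : (Sum.inl i' : BV s r) ∈ d'.support ↔
            (Sum.inl i'.succ : BV (s+1) r) ∈ (liftE d' k).support := by
          rw [Finsupp.mem_support_iff, Finsupp.mem_support_iff]
          have : (Sum.inl i'.succ : BV (s+1) r) = emb (Sum.inl i') := rfl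
          rw [this, liftE_apply_emb]
        split_ifs with h2 h3 h3
        · rw [hp]
          have : (Sum.inl i'.succ : BV (s+1) r) = emb (Sum.inl i') := rfl
          rw [this, ← liftE_sub_single]
        · exact absurd (h1.1 h2) h3
        · exact absurd (h1.2 h3) h2
        · rfl
    · rw [map_mul, toPoly_X_inr, Polynomial.coeff_mul_C, MvPolynomial.coeff_mul_X',
        MvPolynomial.coeff_mul_X']
      have h1 : (Sum.inr j : BV s r) ∈ d'.support ↔
          (Sum.inr j : BV (s+1) r) ∈ (liftE d' k).support := by
        rw [Finsupp.mem_support_iff, Finsupp.mem_support_iff]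
        have : (Sum.inr j : BV (s+1) r) = emb (Sum.inr j) := rfl
        rw [this, liftE_apply_emb]
      split_ifs with h2 h3 h3
      · rw [hp]
        have : (Sum.inr j : BV (s+1) r) = emb (Sum.inr j) := rfl
        rw [this, ← liftE_sub_single]
      · exact absurd (h1.1 h2) h3
      · exact absurd (h1.2 h3) h2
      · rfl

/-- the restriction of an exponent of `R` to `R'` -/
def downE (d : BV (s + 1) r →₀ ℕ) : BV s r →₀ ℕ :=
  Finsupp.equivFunOnFinite.symm fun w => d (emb w)

lemma downE_apply (d : BV (s + 1) r →₀ ℕ) (w : BV s r) : downE d w = d (emb w) := by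
  simp [downE]

lemma liftE_downE (d : BV (s + 1) r →₀ ℕ) : liftE (downE d) (d (Sum.inl 0)) = d := by
  ext v
  rcases v with i | j
  · rcases Fin.eq_zero_or_eq_succ i with rfl | ⟨i', rfl⟩
    · rw [liftE_apply_inl0]
    · have : (Sum.inl i'.succ : BV (s+1) r) = emb (Sum.inl i') := rfl
      rw [this, liftE_apply_emb, downE_apply]
  · have : (Sum.inr j : BV (s+1) r) = emb (Sum.inr j) := rfl
    rw [this, liftE_apply_emb, downE_apply]

lemma resPt_emb (ξ : BV (s + 1) r → K) (w : BV s r) : ξ (emb w) = resPt K s r ξ w := by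
  rcases w with i | j <;> rfl

open Classical in
lemma wdeg_liftE (ξ : BV (s + 1) r → K) (hξ : ξ (Sum.inl 0) = 0) (d' : BV s r →₀ ℕ) (k : ℕ) :
    wdeg ξ (liftE d' k) = k + wdeg (resPt K s r ξ) d' := by
  rw [liftE, wdeg_add, wdeg_single_of_zero ξ hξ, add_comm]
  congr 1
  unfold wdeg
  rw [Finsupp.sum_mapDomain_index (by intro w; simp) (by intro w m n; split <;> simp)]
  apply Finsupp.sum_congr
  intro w _
  rw [resPt_emb ξ w]

end AuxCoeff
noncomputable section AuxMain
open MvPolynomial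
variable {K : Type} [Field K] {s r : ℕ}

lemma coeffAt_mem_pow {ξ : BV (s + 1) r → K} (hξ : ξ (Sum.inl 0) = 0) {c k : ℕ} (hk : k ≤ c)
    {f : BR K (s + 1) r} (hf : f ∈ Ivan K (s + 1) r ξ ^ c) :
    coeffAt K s r f k ∈ Ivan K s r (resPt K s r ξ) ^ (c - k) := by
  rw [Ivan_pow_eq_Jpow] at hf ⊢
  intro d' hd'
  rw [MvPolynomial.mem_support_iff, coeff_coeffAt] at hd'
  have hmem : liftE d' k ∈ f.support := MvPolynomial.mem_support_iff.2 hd'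
  have h1 := hf _ hmem
  rw [wdeg_liftE ξ hξ] at h1
  omega

lemma mem_pow_of_coeffAt {ξ : BV (s + 1) r → K} (hξ : ξ (Sum.inl 0) = 0) {c : ℕ}
    {f : BR K (s + 1) r}
    (h : ∀ k < c, coeffAt K s r f k ∈ Ivan K s r (resPt K s r ξ) ^ (c - k)) :
    f ∈ Ivan K (s + 1) r ξ ^ c := by
  rw [Ivan_pow_eq_Jpow]
  intro d hd
  set k := d (Sum.inl 0) with hkdef
  have hdl : liftE (downE d) k = d := liftE_downE d
  have hwd : wdeg ξ d = k + wdeg (resPt K s r ξ) (downE d) := by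
    rw [← hdl, wdeg_liftE ξ hξ, hdl]
  rcases le_or_gt c k with hck | hck
  · omega
  · have h2 := h k hck
    rw [Ivan_pow_eq_Jpow] at h2
    have hd' : downE d ∈ (coeffAt K s r f k).support := by
      rw [MvPolynomial.mem_support_iff, coeff_coeffAt, hdl]
      exact MvPolynomial.mem_support_iff.1 hd
    have := h2 _ hd'
    omega

lemma Eord_le_pow_iff (ξ : BV s r → K) (J : Ideal (BR K s r)) (n : ℕ) :
    (n : ℕ∞) ≤ Eord K s r ξ J ↔ J ≤ Ivan K s r ξ ^ n := by
  rw [Eord_eq_sSup]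
  exact le_sSup_iff_mem
    (fun a b hab hb => le_trans hb (Ideal.pow_le_pow_right hab))
    (show J ≤ Ivan K s r ξ ^ 0 by rw [pow_zero, Ideal.one_eq_top]; exact le_top) n
end AuxMain

/-- suppose `c > 0` is the maximal `E`-order of `P` on `W`, attained on `W`,
and that every point of `W` where the `E`-order equals `c` lies on the hypersurface
`V = {x_1 = 0}` (static property of a hypersurface of `E`-maximal contact).  Then the
`E`-top locus of `P` equals the `E`-top locus of the coefficient ideal with control `c!`:
`{ξ ∈ W : Eord_ξ(P) = c} = {ξ ∈ W : ξ_1 = 0 ∧ Eord_{ξ'}(C(P,c)) ≥ c!}`. -/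
theorem Etop_eq_Etop_coeffIdeal
    (K : Type) [Field K] [IsAlgClosed K] (s r : ℕ)
    (P : Ideal (BR K (s + 1) r)) (c : ℕ) (hc : 0 < c)
    (hmax : ∀ η ∈ Wset K (s + 1) r, Eord K (s + 1) r η P ≤ (c : ℕ∞))
    (hatt : ∃ ξ₀ ∈ Wset K (s + 1) r, Eord K (s + 1) r ξ₀ P = (c : ℕ∞))
    (hV : ∀ ξ ∈ Wset K (s + 1) r, Eord K (s + 1) r ξ P = (c : ℕ∞) → ξ (Sum.inl 0) = 0) :
    {ξ : BV (s + 1) r → K | ξ ∈ Wset K (s + 1) r ∧ Eord K (s + 1) r ξ P = (c : ℕ∞)} =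
      {ξ : BV (s + 1) r → K | ξ ∈ Wset K (s + 1) r ∧ ξ (Sum.inl 0) = 0 ∧
        (Nat.factorial c : ℕ∞) ≤ Eord K s r (resPt K s r ξ) (coeffIdeal K s r P c)} := by
  ext ξ
  simp only [Set.mem_setOf_eq]
  constructor
  · rintro ⟨hW, hE⟩
    have hx0 := hV ξ hW hE
    refine ⟨hW, hx0, ?_⟩
    have hPc : P ≤ Ivan K (s + 1) r ξ ^ c :=
      (Eord_le_pow_iff ξ P c).1 (le_of_eq hE.symm)
    rw [Eord_le_pow_iff]
    rw [coeffIdeal, Ideal.span_le]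
    rintro g ⟨f, hfP, k, hk, rfl⟩
    have hck : 0 < c - k := by omega
    have hdvd : (c - k) ∣ Nat.factorial c := Nat.dvd_factorial hck (by omega)
    have hmul : (c - k) * (Nat.factorial c / (c - k)) = Nat.factorial c :=
      Nat.mul_div_cancel' hdvd
    have ha : coeffAt K s r f k ∈ Ivan K s r (resPt K s r ξ) ^ (c - k) :=
      coeffAt_mem_pow hx0 (le_of_lt hk) (hPc hfP)
    have : coeffAt K s r f k ^ (Nat.factorial c / (c - k)) ∈
        (Ivan K s r (resPt K s r ξ) ^ (c - k)) ^ (Nat.factorial c / (c - k)) :=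
      Ideal.pow_mem_pow ha _
    rwa [← pow_mul, hmul] at this
  · rintro ⟨hW, hx0, hC⟩
    have hCle : coeffIdeal K s r P c ≤ Ivan K s r (resPt K s r ξ) ^ Nat.factorial c :=
      (Eord_le_pow_iff _ _ _).1 hC
    have hPc : P ≤ Ivan K (s + 1) r ξ ^ c := by
      intro f hf
      apply mem_pow_of_coeffAt hx0
      intro k hk
      have hck : 0 < c - k := by omega
      have hdvd : (c - k) ∣ Nat.factorial c := Nat.dvd_factorial hck (by omega)
      have hmul : (c - k) * (Nat.factorial c / (c - k)) = Nat.factorial c :=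
        Nat.mul_div_cancel' hdvd
      have hN : 0 < Nat.factorial c / (c - k) :=
        Nat.div_pos (Nat.le_of_dvd (Nat.factorial_pos c) hdvd) hck
      have hg : coeffAt K s r f k ^ (Nat.factorial c / (c - k)) ∈
          Ivan K s r (resPt K s r ξ) ^ Nat.factorial c :=
        hCle (Ideal.subset_span ⟨f, hf, k, hk, rfl⟩)
      rw [Ivan_pow_eq_Jpow] at hg ⊢
      exact pow_descent_Jpow hN (by rw [hmul]; exact hg)
    refine ⟨hW, le_antisymm (hmax ξ hW) ?_⟩
    exact (Eord_le_pow_iff ξ P c).2 hPc
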